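/- Let μ > 0 and p' ≤ p* ≤ p'' with p' < p''. Suppose a function w: [p',p''] → ℝ is affine on [p',p''] and satisfies w(p') = Y'·u' + (1−Y')·w(p'') and w(p'') = Y''·u'' + (1−Y'')·w(p'), where Y' = μ(p''−p')/(p*−p' + μ(p''−p')) and Y'' = μ(p''−p')/(p''−p* + μ(p''−p')), and u', u'' ∈ ℝ. Then for every p ∈ [p',p''], w(p) = u'·(p''(μ+1)−p*−μp)/((p''−p')(μ+1)) + u''·(p*−p'(μ+1)+μp)/((p''−p')(μ+1)). -/

import Mathlib

theorem stmt_6 (μ pstar p' p'' u' u'' : ℝ) (hμ : 0 < μ)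
    (h1 : p' ≤ pstar) (h2 : pstar ≤ p'') (h3 : p' < p'')
    (w : ℝ → ℝ)
    (haff : ∃ a b : ℝ, ∀ p ∈ Set.Icc p' p'', w p = a * p + b)
    (hY' : w p' = (μ * (p'' - p') / (pstar - p' + μ * (p'' - p'))) * u'
        + (1 - μ * (p'' - p') / (pstar - p' + μ * (p'' - p'))) * w p'')
    (hY'' : w p'' = (μ * (p'' - p') / (p'' - pstar + μ * (p'' - p'))) * u''
        + (1 - μ * (p'' - p') / (p'' - pstar + μ * (p'' - p'))) * w p') :
    ∀ p ∈ Set.Icc p' p'',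
      w p = u' * (p'' * (μ + 1) - pstar - μ * p) / ((p'' - p') * (μ + 1))
          + u'' * (pstar - p' * (μ + 1) + μ * p) / ((p'' - p') * (μ + 1)) := by
  obtain ⟨a, b, hab⟩ := haff
  have hΔ : (0:ℝ) < p'' - p' := sub_pos.2 h3
  have hD1 : (0:ℝ) < pstar - p' + μ * (p'' - p') := by nlinarith
  have hD2 : (0:ℝ) < p'' - pstar + μ * (p'' - p') := by nlinarith
  have hwp' : w p' = a * p' + b := hab p' ⟨le_refl _, le_of_lt h3⟩
  have hwp'' : w p'' = a * p'' + b := hab p'' ⟨le_of_lt h3, le_refl _⟩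
  rw [hwp', hwp''] at hY' hY''
  field_simp at hY' hY''
  have e1 : (μ * (a * p' + b) - a * (pstar - p') - μ * u') * (p'' - p') = 0 := by
    linear_combination hY'
  have e2 : (a * (p'' - pstar) + μ * (a * p'' + b) - μ * u'') * (p'' - p') = 0 := by
    linear_combination hY''
  have e1' : μ * (a * p' + b) - a * (pstar - p') - μ * u' = 0 :=
    (mul_eq_zero.mp e1).resolve_right hΔ.ne'
  have e2' : a * (p'' - pstar) + μ * (a * p'' + b) - μ * u'' = 0 :=
    (mul_eq_zero.mp e2).resolve_right hΔ.ne'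
  intro p hp
  rw [hab p hp]
  have hμ1 : (0:ℝ) < μ + 1 := by linarith
  rw [← add_div, eq_div_iff (by positivity)]
  apply mul_right_cancel₀ hμ.ne'
  linear_combination (p'' * (μ + 1) - pstar - μ * p) * e1'
    + (pstar - p' * (μ + 1) + μ * p) * e2'
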